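/- arXiv:0909.3582 — 3 statements merged into one kernel-verified Lean document; each statement's English description precedes it below -/
import Mathlib

section
/- Let k, l ∈ ℤ³ satisfy k₀+k₁+k₂ = l₀+l₁+l₂ and the freeness condition, and suppose the leftmost column of A has nonzero pairwise coprime entries, i.e. A₀₀, A₁₀, A₂₀ are nonzero and pairwise coprime. Then A₀₀ is nonzero and coprime to each of A₁₀, A₂₀, A₁₁, A₂₁; A₁₀ is nonzero and coprime to each of A₀₀, A₂₀, A₀₁, A₂₁; and A₂₀ is nonzero and coprime to each of A₀₀, A₁₀, A₀₁, A₁₁. -/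
/-- The matrix `A` of an Eschenburg space: `A k l i j = k i - l j`. -/
def A (k l : Fin 3 → ℤ) (i j : Fin 3) : ℤ := k i - l j

lemma aux3 (x y z : ℤ) (h : x + y + z = 0)
    (hg : Int.gcd x (Int.gcd y z) = 1) :
    Int.gcd x y = 1 ∧ Int.gcd x z = 1 ∧ Int.gcd y z = 1 := by
  refine ⟨?_, ?_, ?_⟩
  · have h1 : (Int.gcd x y : ℤ) ∣ x := Int.gcd_dvd_left x y
    have h2 : (Int.gcd x y : ℤ) ∣ y := Int.gcd_dvd_right x y
    have h3 : (Int.gcd x y : ℤ) ∣ z := by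
      have hz : z = -x - y := by linarith
      rw [hz]; exact dvd_sub (dvd_neg.mpr h1) h2
    have hd : (Int.gcd x y : ℤ) ∣ (Int.gcd x (Int.gcd y z) : ℤ) :=
      Int.dvd_coe_gcd h1 (Int.dvd_coe_gcd h2 h3)
    rw [hg] at hd
    exact_mod_cast Int.eq_one_of_dvd_one (by positivity) hd
  · have h1 : (Int.gcd x z : ℤ) ∣ x := Int.gcd_dvd_left x z
    have h2 : (Int.gcd x z : ℤ) ∣ z := Int.gcd_dvd_right x z
    have h3 : (Int.gcd x z : ℤ) ∣ y := by
      have hz : y = -x - z := by linarith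
      rw [hz]; exact dvd_sub (dvd_neg.mpr h1) h2
    have hd : (Int.gcd x z : ℤ) ∣ (Int.gcd x (Int.gcd y z) : ℤ) :=
      Int.dvd_coe_gcd h1 (Int.dvd_coe_gcd h3 h2)
    rw [hg] at hd
    exact_mod_cast Int.eq_one_of_dvd_one (by positivity) hd
  · have h1 : (Int.gcd y z : ℤ) ∣ y := Int.gcd_dvd_left y z
    have h2 : (Int.gcd y z : ℤ) ∣ z := Int.gcd_dvd_right y z
    have h3 : (Int.gcd y z : ℤ) ∣ x := by
      have hz : x = -y - z := by linarith
      rw [hz]; exact dvd_sub (dvd_neg.mpr h1) h2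
    have hd : (Int.gcd y z : ℤ) ∣ (Int.gcd x (Int.gcd y z) : ℤ) :=
      Int.dvd_coe_gcd h3 (Int.dvd_coe_gcd h1 h2)
    rw [hg] at hd
    exact_mod_cast Int.eq_one_of_dvd_one (by positivity) hd

/-- If `k, l ∈ ℤ³` have equal sums, satisfy the freeness condition, and the
leftmost column of `A` has nonzero pairwise coprime entries, then `A₀₀` is
nonzero and coprime to each of `A₁₀, A₂₀, A₁₁, A₂₁`; `A₁₀` is nonzero and
coprime to each of `A₀₀, A₂₀, A₀₁, A₂₁`; and `A₂₀` is nonzero and coprime to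
each of `A₀₀, A₁₀, A₀₁, A₁₁`. -/
theorem stmt3 (k l : Fin 3 → ℤ)
    (hsum : k 0 + k 1 + k 2 = l 0 + l 1 + l 2)
    (hfree : ∀ σ : Equiv.Perm (Fin 3),
      Int.gcd (k 0 - l (σ 0)) (Int.gcd (k 1 - l (σ 1)) (k 2 - l (σ 2))) = 1)
    (h00 : A k l 0 0 ≠ 0) (h10 : A k l 1 0 ≠ 0) (h20 : A k l 2 0 ≠ 0)
    (hc1 : Int.gcd (A k l 0 0) (A k l 1 0) = 1)
    (hc2 : Int.gcd (A k l 0 0) (A k l 2 0) = 1)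
    (hc3 : Int.gcd (A k l 1 0) (A k l 2 0) = 1) :
    (A k l 0 0 ≠ 0 ∧ Int.gcd (A k l 0 0) (A k l 1 0) = 1 ∧
      Int.gcd (A k l 0 0) (A k l 2 0) = 1 ∧ Int.gcd (A k l 0 0) (A k l 1 1) = 1 ∧
      Int.gcd (A k l 0 0) (A k l 2 1) = 1) ∧
    (A k l 1 0 ≠ 0 ∧ Int.gcd (A k l 1 0) (A k l 0 0) = 1 ∧
      Int.gcd (A k l 1 0) (A k l 2 0) = 1 ∧ Int.gcd (A k l 1 0) (A k l 0 1) = 1 ∧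
      Int.gcd (A k l 1 0) (A k l 2 1) = 1) ∧
    (A k l 2 0 ≠ 0 ∧ Int.gcd (A k l 2 0) (A k l 0 0) = 1 ∧
      Int.gcd (A k l 2 0) (A k l 1 0) = 1 ∧ Int.gcd (A k l 2 0) (A k l 0 1) = 1 ∧
      Int.gcd (A k l 2 0) (A k l 1 1) = 1) := by
  simp only [A] at *
  -- identity permutation: (k0-l0, k1-l1, k2-l2)
  have hid := hfree 1
  simp only [Equiv.Perm.one_apply] at hid
  have Hid := aux3 _ _ _ (by linarith) hid
  -- swap 1 2 : (k0-l0, k1-l2, k2-l1)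
  have hs12 := hfree (Equiv.swap 1 2)
  rw [show (Equiv.swap 1 2 : Equiv.Perm (Fin 3)) 0 = 0 from by decide,
      show (Equiv.swap 1 2 : Equiv.Perm (Fin 3)) 1 = 2 from by decide,
      show (Equiv.swap 1 2 : Equiv.Perm (Fin 3)) 2 = 1 from by decide] at hs12
  have Hs12 := aux3 _ _ _ (by linarith) hs12
  -- swap 0 1 : (k0-l1, k1-l0, k2-l2)
  have hs01 := hfree (Equiv.swap 0 1)
  rw [show (Equiv.swap 0 1 : Equiv.Perm (Fin 3)) 0 = 1 from by decide,
      show (Equiv.swap 0 1 : Equiv.Perm (Fin 3)) 1 = 0 from by decide,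
      show (Equiv.swap 0 1 : Equiv.Perm (Fin 3)) 2 = 2 from by decide] at hs01
  have Hs01 := aux3 _ _ _ (by linarith) hs01
  -- cycle 0↦2,1↦0,2↦1 : (k0-l2, k1-l0, k2-l1)
  have hc201 := hfree (Equiv.swap 1 2 * Equiv.swap 0 1)
  rw [show (Equiv.swap 1 2 * Equiv.swap 0 1 : Equiv.Perm (Fin 3)) 0 = 2 from by decide,
      show (Equiv.swap 1 2 * Equiv.swap 0 1 : Equiv.Perm (Fin 3)) 1 = 0 from by decide,
      show (Equiv.swap 1 2 * Equiv.swap 0 1 : Equiv.Perm (Fin 3)) 2 = 1 from by decide] at hc201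
  have Hc201 := aux3 _ _ _ (by linarith) hc201
  -- cycle 0↦1,1↦2,2↦0 : (k0-l1, k1-l2, k2-l0)
  have hc120 := hfree (Equiv.swap 0 1 * Equiv.swap 1 2)
  rw [show (Equiv.swap 0 1 * Equiv.swap 1 2 : Equiv.Perm (Fin 3)) 0 = 1 from by decide,
      show (Equiv.swap 0 1 * Equiv.swap 1 2 : Equiv.Perm (Fin 3)) 1 = 2 from by decide,
      show (Equiv.swap 0 1 * Equiv.swap 1 2 : Equiv.Perm (Fin 3)) 2 = 0 from by decide] at hc120
  have Hc120 := aux3 _ _ _ (by linarith) hc120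
  -- swap 0 2 : (k0-l2, k1-l1, k2-l0)
  have hs02 := hfree (Equiv.swap 0 2)
  rw [show (Equiv.swap 0 2 : Equiv.Perm (Fin 3)) 0 = 2 from by decide,
      show (Equiv.swap 0 2 : Equiv.Perm (Fin 3)) 1 = 1 from by decide,
      show (Equiv.swap 0 2 : Equiv.Perm (Fin 3)) 2 = 0 from by decide] at hs02
  have Hs02 := aux3 _ _ _ (by linarith) hs02
  refine ⟨⟨h00, hc1, hc2, Hid.1, Hs12.2.1⟩,
    ⟨h10, by rw [Int.gcd_comm]; exact hc1, hc3,
      by rw [Int.gcd_comm]; exact Hs01.1, Hc201.2.2⟩,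
    ⟨h20, by rw [Int.gcd_comm]; exact hc2, by rw [Int.gcd_comm]; exact hc3,
      by rw [Int.gcd_comm]; exact Hc120.2.1, by rw [Int.gcd_comm]; exact Hs02.2.2⟩⟩
end

section
/- Let k, l ∈ ℤ³ satisfy k₀+k₁+k₂ = l₀+l₁+l₂ and the freeness condition. Then r = σ₂(k) − σ₂(l) is odd. -/
lemma zmod2_perm (a b : Fin 3 → ZMod 2)
    (h1 : a 0 + a 1 + a 2 = b 0 + b 1 + b 2)
    (h2 : a 0 * a 1 + a 0 * a 2 + a 1 * a 2 = b 0 * b 1 + b 0 * b 2 + b 1 * b 2) :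
    ∃ σ : Equiv.Perm (Fin 3), ∀ i, a i = b (σ i) := by
  revert h1 h2
  revert a b
  decide

/-- If `k, l ∈ ℤ³` have equal sums and satisfy the freeness condition, then
`r = σ₂(k) - σ₂(l)` is odd. -/
theorem stmt4 (k l : Fin 3 → ℤ)
    (hsum : k 0 + k 1 + k 2 = l 0 + l 1 + l 2)
    (hfree : ∀ σ : Equiv.Perm (Fin 3),
      Int.gcd (k 0 - l (σ 0)) (Int.gcd (k 1 - l (σ 1)) (k 2 - l (σ 2))) = 1) :
    Odd ((k 0 * k 1 + k 0 * k 2 + k 1 * k 2) -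
      (l 0 * l 1 + l 0 * l 2 + l 1 * l 2)) := by
  by_contra hodd
  rw [Int.not_odd_iff_even] at hodd
  set a : Fin 3 → ZMod 2 := fun i => (k i : ZMod 2) with ha
  set b : Fin 3 → ZMod 2 := fun i => (l i : ZMod 2) with hb
  have h1 : a 0 + a 1 + a 2 = b 0 + b 1 + b 2 := by
    simp only [ha, hb]
    exact_mod_cast congrArg (Int.cast : ℤ → ZMod 2) hsum
  have h2 : a 0 * a 1 + a 0 * a 2 + a 1 * a 2 = b 0 * b 1 + b 0 * b 2 + b 1 * b 2 := by
    have h2' : ((k 0 * k 1 + k 0 * k 2 + k 1 * k 2 -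
        (l 0 * l 1 + l 0 * l 2 + l 1 * l 2) : ℤ) : ZMod 2) = 0 := by
      rw [ZMod.intCast_zmod_eq_zero_iff_dvd]
      exact_mod_cast hodd.two_dvd
    simp only [ha, hb]
    push_cast at h2'
    linear_combination h2'
  obtain ⟨σ, hσ⟩ := zmod2_perm a b h1 h2
  have hd : ∀ i, (2 : ℤ) ∣ (k i - l (σ i)) := by
    intro i
    have h0 : ((k i - l (σ i) : ℤ) : ZMod 2) = 0 := by
      push_cast
      have := hσ i
      simp only [ha, hb] at this
      rw [this, sub_self]
    exact_mod_cast (ZMod.intCast_zmod_eq_zero_iff_dvd _ 2).mp h0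
  have : (2 : ℤ) ∣ (Int.gcd (k 0 - l (σ 0)) (Int.gcd (k 1 - l (σ 1)) (k 2 - l (σ 2))) : ℤ) :=
    Int.dvd_coe_gcd (hd 0) (Int.dvd_coe_gcd (hd 1) (hd 2))
  rw [hfree σ] at this
  norm_num at this
end

section
/- Let k, l ∈ ℤ³ satisfy k₀+k₁+k₂ = l₀+l₁+l₂ and the freeness condition, and suppose A₀₀·A₁₀·A₂₀ ≠ 0, where A_{ij} = k_i − l_j. Then w = (σ₂(k) − σ₂(l))·A₀₀·A₁₀·A₂₀ ≠ 0. -/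
lemma parity_perm : ∀ a b : Fin 3 → ZMod 2,
    a 0 + a 1 + a 2 = b 0 + b 1 + b 2 →
    a 0 * a 1 + a 0 * a 2 + a 1 * a 2 = b 0 * b 1 + b 0 * b 2 + b 1 * b 2 →
    ∃ σ : Equiv.Perm (Fin 3), a 0 = b (σ 0) ∧ a 1 = b (σ 1) ∧ a 2 = b (σ 2) := by
  decide

/-- If `k, l ∈ ℤ³` have equal sums, satisfy the freeness condition, and
`A₀₀ A₁₀ A₂₀ ≠ 0` where `A_{ij} = k_i - l_j`, then
`w = (σ₂(k) - σ₂(l)) ⬝ A₀₀ A₁₀ A₂₀ ≠ 0`. -/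
theorem stmt5 (k l : Fin 3 → ℤ)
    (hsum : k 0 + k 1 + k 2 = l 0 + l 1 + l 2)
    (hfree : ∀ σ : Equiv.Perm (Fin 3),
      Int.gcd (k 0 - l (σ 0)) (Int.gcd (k 1 - l (σ 1)) (k 2 - l (σ 2))) = 1)
    (hA : (k 0 - l 0) * (k 1 - l 0) * (k 2 - l 0) ≠ 0) :
    ((k 0 * k 1 + k 0 * k 2 + k 1 * k 2) - (l 0 * l 1 + l 0 * l 2 + l 1 * l 2)) *
      ((k 0 - l 0) * (k 1 - l 0) * (k 2 - l 0)) ≠ 0 := by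
  intro h
  have hD : (k 0 * k 1 + k 0 * k 2 + k 1 * k 2) = (l 0 * l 1 + l 0 * l 2 + l 1 * l 2) := by
    rcases mul_eq_zero.mp h with h' | h'
    · linarith
    · exact absurd h' hA
  -- cast to ZMod 2
  have hs2 : ((k 0 : ZMod 2) + k 1 + k 2) = (l 0 : ZMod 2) + l 1 + l 2 := by
    exact_mod_cast congrArg (Int.cast : ℤ → ZMod 2) hsum
  have hd2 : ((k 0 : ZMod 2) * k 1 + (k 0 : ZMod 2) * k 2 + (k 1 : ZMod 2) * k 2)
      = (l 0 : ZMod 2) * l 1 + (l 0 : ZMod 2) * l 2 + (l 1 : ZMod 2) * l 2 := by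
    exact_mod_cast congrArg (Int.cast : ℤ → ZMod 2) hD
  obtain ⟨σ, h0, h1, h2⟩ := parity_perm (fun i => (k i : ZMod 2)) (fun j => (l j : ZMod 2)) hs2 hd2
  have d0 : (2 : ℤ) ∣ k 0 - l (σ 0) := by
    have := (ZMod.intCast_eq_intCast_iff' _ _ _).mp h0
    omega
  have d1 : (2 : ℤ) ∣ k 1 - l (σ 1) := by
    have := (ZMod.intCast_eq_intCast_iff' _ _ _).mp h1
    omega
  have d2 : (2 : ℤ) ∣ k 2 - l (σ 2) := by
    have := (ZMod.intCast_eq_intCast_iff' _ _ _).mp h2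
    omega
  have hg := hfree σ
  have : (2 : ℤ) ∣ (Int.gcd (k 0 - l (σ 0)) (Int.gcd (k 1 - l (σ 1)) (k 2 - l (σ 2))) : ℤ) :=
    Int.dvd_coe_gcd d0 (Int.dvd_coe_gcd d1 d2)
  rw [hg] at this
  norm_num at this
end
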